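/- For every infinite set A and natural number n, there is no boundedly finite-to-one function from the set S(A) of all permutations of A to the set S_{≤n}(A) of permutations of A moving at most n points. -/
import Mathlib

open Cardinal

/-- `f` is boundedly finite-to-one: some `k` bounds the size of every fiber. -/
def BddFinToOne {α β : Type*} (f : α → β) : Prop :=
  ∃ k : ℕ, ∀ b : β, (f ⁻¹' {b}).Finite ∧ (f ⁻¹' {b}).ncard ≤ k

open scoped Classical in
/-- A finitely supported permutation is determined by its set of (moved point, image) pairs. -/
lemma perm_pairs_inj {A : Type*} (s t : Equiv.Perm A) (hs : {a | s a ≠ a}.Finite)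
    (ht : {a | t a ≠ a}.Finite)
    (h : hs.toFinset.image (fun a => (a, s a)) = ht.toFinset.image (fun a => (a, t a))) :
    s = t := by
  ext a
  by_cases hsa : s a = a
  · by_cases hta : t a = a
    · rw [hsa, hta]
    · exfalso
      have : (a, t a) ∈ ht.toFinset.image (fun a => (a, t a)) := by
        simp [Set.Finite.mem_toFinset, hta]
      rw [← h] at this
      simp only [Finset.mem_image, Set.Finite.mem_toFinset, Set.mem_setOf_eq] at this
      obtain ⟨b, hb, hb2⟩ := this
      obtain ⟨rfl, h2⟩ := Prod.mk.injEq .. ▸ hb2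
      exact hb (h2 ▸ hsa)
  · have : (a, s a) ∈ hs.toFinset.image (fun a => (a, s a)) := by
      simp [Set.Finite.mem_toFinset, hsa]
    rw [h] at this
    simp only [Finset.mem_image, Set.Finite.mem_toFinset, Set.mem_setOf_eq] at this
    obtain ⟨b, hb, hb2⟩ := this
    obtain ⟨rfl, h2⟩ := Prod.mk.injEq .. ▸ hb2
    exact h2.symm

/-- For every infinite set `A` and natural number `n`, there is no boundedly
finite-to-one function from `S(A)` to `S_{≤n}(A)`. -/
theorem stmt_12 (A : Type*) [Infinite A] (n : ℕ)
    (f : Equiv.Perm A → {s : Equiv.Perm A | {a | s a ≠ a}.Finite ∧ {a | s a ≠ a}.ncard ≤ n}) :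
    ¬ BddFinToOne f := by
  classical
  rintro ⟨k, hk⟩
  -- the codomain has cardinality at most #A
  have htgt : #{s : Equiv.Perm A | {a | s a ≠ a}.Finite ∧ {a | s a ≠ a}.ncard ≤ n} ≤ #A := by
    have : #{s : Equiv.Perm A | {a | s a ≠ a}.Finite ∧ {a | s a ≠ a}.ncard ≤ n}
        ≤ #(Finset (A × A)) := by
      refine mk_le_of_injective (f := fun s =>
        s.2.1.toFinset.image (fun a => (a, s.1 a))) ?_
      rintro ⟨s, hs⟩ ⟨t, ht⟩ h
      exact Subtype.ext (perm_pairs_inj s t hs.1 ht.1 h)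
    calc #{s : Equiv.Perm A | {a | s a ≠ a}.Finite ∧ {a | s a ≠ a}.ncard ≤ n}
        ≤ #(Finset (A × A)) := this
      _ = #(A × A) := mk_finset_of_infinite _
      _ = #A := mul_eq_self (aleph0_le_mk A) ▸ (mk_prod A A ▸ by simp)
  -- fibers are small
  have hsmall : ∀ b, #(f ⁻¹' {b}) ≤ ℵ₀ := fun b => ((hk b).1.lt_aleph0).le
  have h1 : #(Equiv.Perm A) ≤ #A := by
    calc #(Equiv.Perm A) ≤ _ * ℵ₀ := mk_le_mk_mul_of_mk_preimage_le f hsmall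
      _ ≤ #A * ℵ₀ := by gcongr
      _ = #A := mk_mul_aleph0_eq
  have h2 : #A < #(Equiv.Perm A) := by
    rw [mk_perm_eq_two_power]
    exact cantor _
  exact absurd (h1.trans_lt h2) (lt_irrefl _)
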